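/- Minty identification: let (Ω, μ) be a σ-finite measure space and define U : ℝ → ℝ by U(r) = r for r ≤ 0, U(r) = 0 for 0 ≤ r ≤ 1, and U(r) = r − 1 for r ≥ 1 (so that U = E^{-1} for the Stefan energy graph E). Suppose χ, u ∈ L²(μ) satisfy ∫_Ω (χ − w)(u − U∘w) dμ ≥ 0 for every w ∈ L²(μ). Then u = U∘χ almost everywhere on Ω. -/

import Mathlib

open MeasureTheory

lemma U_lipschitz_aux (U : ℝ → ℝ)
    (hU : ∀ r : ℝ, U r = if r ≤ 0 then r else if r ≤ 1 then 0 else r - 1) :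
    ∀ a b : ℝ, |U a - U b| ≤ |a - b| := by
  intro a b
  rw [hU a, hU b, abs_le]
  have h1 := le_abs_self (a - b)
  have h2 := neg_abs_le (a - b)
  split_ifs <;> constructor <;> linarith

lemma mul_integrable_aux {Ω : Type*} [MeasurableSpace Ω] {μ : Measure Ω}
    {f g : Ω → ℝ} (hf : MemLp f 2 μ) (hg : MemLp g 2 μ) :
    Integrable (fun x => f x * g x) μ := by
  have hint : Integrable (fun x => (f x ^ 2 + g x ^ 2) / 2) μ :=
    (hf.integrable_sq.add hg.integrable_sq).div_const 2
  apply Integrable.mono' hint (hf.aestronglyMeasurable.mul hg.aestronglyMeasurable)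
  filter_upwards with x
  simp only [Pi.mul_apply, Real.norm_eq_abs, abs_mul]
  nlinarith [sq_nonneg (|f x| - |g x|), sq_abs (f x), sq_abs (g x), abs_nonneg (f x), abs_nonneg (g x)]

/-- Minty identification for the Stefan nonlinearity: if `χ, u ∈ L²(μ)` satisfy
`∫ (χ − w)(u − U∘w) dμ ≥ 0` for every `w ∈ L²(μ)`, where `U = E⁻¹` is the
inverse of the Stefan energy graph, then `u = U∘χ` a.e. -/
theorem minty_identification
    {Ω : Type*} [MeasurableSpace Ω] (μ : Measure Ω) [SigmaFinite μ]
    (U : ℝ → ℝ)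
    (hU : ∀ r : ℝ, U r = if r ≤ 0 then r else if r ≤ 1 then 0 else r - 1)
    (χ u : Ω → ℝ) (hχ : MemLp χ 2 μ) (hu : MemLp u 2 μ)
    (h : ∀ w : Ω → ℝ, MemLp w 2 μ →
      0 ≤ ∫ x, (χ x - w x) * (u x - U (w x)) ∂μ) :
    u =ᵐ[μ] fun x => U (χ x) := by
  have hlip := U_lipschitz_aux U hU
  have hUcont : Continuous U :=
    (LipschitzWith.of_dist_le_mul (K := 1) (by
      intro a b
      rw [Real.dist_eq, Real.dist_eq, NNReal.coe_one, one_mul]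
      exact hlip a b)).continuous
  -- U∘f is in L² whenever f is
  have hUmem : ∀ f : Ω → ℝ, MemLp f 2 μ → MemLp (fun x => U (f x)) 2 μ := by
    intro f hf
    refine MemLp.of_le hf (hUcont.comp_aestronglyMeasurable hf.aestronglyMeasurable) ?_
    filter_upwards with x
    rw [Real.norm_eq_abs, Real.norm_eq_abs]
    have h0 : U 0 = 0 := by rw [hU]; simp
    have := hlip (f x) 0
    simpa [h0] using this
  set v : Ω → ℝ := fun x => u x - U (χ x) with hv
  have hvmem : MemLp v 2 μ := hu.sub (hUmem χ hχ)
  set w : Ω → ℝ := fun x => χ x + (1/2) * v x with hw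
  have hwmem : MemLp w 2 μ := hχ.add (hvmem.const_mul _)
  have hkey := h w hwmem
  -- pointwise: (χ - w)(u - U w) ≤ -(1/4) v²
  have hpt : ∀ x, (χ x - w x) * (u x - U (w x)) ≤ -(1/4) * v x ^ 2 := by
    intro x
    have hl := hlip (w x) (χ x)
    have hwx : w x - χ x = (1/2) * v x := by simp only [hw]; ring
    rw [hwx] at hl
    have habs : |(1/2) * v x| = (1/2) * |v x| := by
      rw [abs_mul]; norm_num
    rw [habs] at hl
    have hux : u x - U (w x) = v x - (U (w x) - U (χ x)) := by simp only [hv]; ring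
    have hc : χ x - w x = -((1/2) * v x) := by simp only [hw]; ring
    rw [hc, hux]
    have h1 := le_abs_self (U (w x) - U (χ x))
    have h2 := neg_abs_le (U (w x) - U (χ x))
    have h3 := le_abs_self (v x)
    have h4 := neg_abs_le (v x)
    nlinarith [sq_abs (v x), abs_nonneg (v x)]
  -- integrability of the integrand
  have hint : Integrable (fun x => (χ x - w x) * (u x - U (w x))) μ :=
    mul_integrable_aux (hχ.sub hwmem) (hu.sub (hUmem w hwmem))
  have hint2 : Integrable (fun x => -(1/4) * v x ^ 2) μ :=
    (hvmem.integrable_sq.const_mul _)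
  have hle : ∫ x, (χ x - w x) * (u x - U (w x)) ∂μ ≤ ∫ x, -(1/4) * v x ^ 2 ∂μ :=
    integral_mono hint hint2 hpt
  have hvsq : ∫ x, v x ^ 2 ∂μ ≤ 0 := by
    rw [integral_const_mul] at hle
    nlinarith [hkey]
  have hzero : ∫ x, v x ^ 2 ∂μ = 0 :=
    le_antisymm hvsq (integral_nonneg fun x => sq_nonneg _)
  have hv0 : (fun x => v x ^ 2) =ᵐ[μ] 0 := by
    rw [← integral_eq_zero_iff_of_nonneg (fun x => sq_nonneg (v x)) hvmem.integrable_sq]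
    exact hzero
  filter_upwards [hv0] with x hx
  have : v x ^ 2 = 0 := hx
  have : v x = 0 := by nlinarith
  simpa [hv, sub_eq_zero] using this
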